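/- There exists ε₀ > 0 such that for every 0 < ε < ε₀ the following holds. Let (X, F_X, ν_X) and (Y, F_Y, ν_Y) be probability spaces and let θ : X → Y be a bi-measurable bijection with θ_*ν_X = ν_Y. Let μ_X and μ_Y be probability measures on X and Y equivalent to ν_X and ν_Y respectively, with densities ρ_X = dμ_X/dν_X and ρ_Y = dμ_Y/dν_Y. Set E_X = {x ∈ X : |ρ_X(x) − 1| < ε} and E_Y = {y ∈ Y : |ρ_Y(y) − 1| < ε}. If μ_X(E_X) ≥ 1 − ε and ν_Y(E_Y) ≥ 1 − ε, then the map θ, viewed as a map from (X, μ_X) to (Y, μ_Y), is 5ε-measure preserving. -/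

import Mathlib

open MeasureTheory

/-- A (bi-measurable) map `θ : (X, μ) → (Y, ν)` is `ε`-measure preserving if there is a
measurable set `E ⊆ X` with `μ E < ε` such that for every measurable `S ⊆ X \ E` one has
`(1 - ε) · ν (θ '' S) ≤ μ S ≤ (1 + ε) · ν (θ '' S)`. -/
def EpsMeasurePreserving {X Y : Type*} [MeasurableSpace X] [MeasurableSpace Y]
    (μ : Measure X) (ν : Measure Y) (θ : X → Y) (ε : ℝ) : Prop :=
  ∃ E : Set X, MeasurableSet E ∧ μ E < ENNReal.ofReal ε ∧
    ∀ S : Set X, MeasurableSet S → S ⊆ Eᶜ →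
      ENNReal.ofReal (1 - ε) * ν (θ '' S) ≤ μ S ∧
        μ S ≤ ENNReal.ofReal (1 + ε) * ν (θ '' S)

/-- On a set where the density is `ε`-close to `1`, the measures are comparable. -/
lemma density_close_bounds {X : Type*} [MeasurableSpace X] (μ ν : Measure X)
    [IsFiniteMeasure μ] [IsFiniteMeasure ν] (hμν : μ ≪ ν) {ε : ℝ} (hε1 : ε < 1)
    {S : Set X} (hS : MeasurableSet S)
    (hsub : ∀ x ∈ S, |(μ.rnDeriv ν x).toReal - 1| < ε) :
    ENNReal.ofReal (1 - ε) * ν S ≤ μ S ∧ μ S ≤ ENNReal.ofReal (1 + ε) * ν S := by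
  have hbound : ∀ x ∈ S, ENNReal.ofReal (1 - ε) ≤ μ.rnDeriv ν x ∧
      μ.rnDeriv ν x ≤ ENNReal.ofReal (1 + ε) := by
    intro x hx
    have h := abs_lt.mp (hsub x hx)
    have hne : μ.rnDeriv ν x ≠ ⊤ := by
      intro h'
      rw [h'] at h
      simp only [ENNReal.toReal_top] at h
      linarith [h.1]
    rw [← ENNReal.ofReal_toReal hne]
    constructor <;> apply ENNReal.ofReal_le_ofReal <;> linarith [h.1, h.2]
  have heq : μ S = ∫⁻ x in S, μ.rnDeriv ν x ∂ν := (Measure.setLIntegral_rnDeriv hμν S).symm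
  constructor
  · calc ENNReal.ofReal (1 - ε) * ν S = ∫⁻ _ in S, ENNReal.ofReal (1 - ε) ∂ν := by
          rw [setLIntegral_const]
      _ ≤ ∫⁻ x in S, μ.rnDeriv ν x ∂ν :=
          setLIntegral_mono (Measure.measurable_rnDeriv μ ν) (fun x hx => (hbound x hx).1)
      _ = μ S := heq.symm
  · calc μ S = ∫⁻ x in S, μ.rnDeriv ν x ∂ν := heq
      _ ≤ ∫⁻ _ in S, ENNReal.ofReal (1 + ε) ∂ν :=
          setLIntegral_mono measurable_const (fun x hx => (hbound x hx).2)
      _ = ENNReal.ofReal (1 + ε) * ν S := setLIntegral_const _ _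

/-- There is `ε₀ > 0` such that for all `0 < ε < ε₀`: if `θ` is a
bi-measurable bijection of probability spaces pushing `ν_X` to `ν_Y`, `μ_X ~ ν_X` and
`μ_Y ~ ν_Y` are probability measures whose densities are `ε`-close to `1` on sets
`E_X`, `E_Y` with `μ_X E_X ≥ 1 - ε` and `ν_Y E_Y ≥ 1 - ε`, then
`θ : (X, μ_X) → (Y, μ_Y)` is `5ε`-measure preserving. -/
theorem epsMeasurePreserving_of_density_close :
    ∃ ε₀ : ℝ, 0 < ε₀ ∧
      ∀ ε : ℝ, 0 < ε → ε < ε₀ →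
        ∀ (X : Type u) (Y : Type v) [MeasurableSpace X] [MeasurableSpace Y]
          (νX : Measure X) (νY : Measure Y),
          IsProbabilityMeasure νX → IsProbabilityMeasure νY →
          ∀ θ : X ≃ᵐ Y, Measure.map θ νX = νY →
          ∀ (μX : Measure X) (μY : Measure Y),
            IsProbabilityMeasure μX → IsProbabilityMeasure μY →
            μX ≪ νX → νX ≪ μX → μY ≪ νY → νY ≪ μY →
            ENNReal.ofReal (1 - ε) ≤ μX {x | |(μX.rnDeriv νX x).toReal - 1| < ε} →
            ENNReal.ofReal (1 - ε) ≤ νY {y | |(μY.rnDeriv νY y).toReal - 1| < ε} →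
            EpsMeasurePreserving μX μY θ (5 * ε) := by
  refine ⟨1/10, by norm_num, ?_⟩
  intro ε hε hε' X Y _ _ νX νY hνX hνY θ hmap μX μY hμX hμY hXac hXac' hYac hYac' hEX hEY
  set EX : Set X := {x | |(μX.rnDeriv νX x).toReal - 1| < ε} with hEXdef
  set EY : Set Y := {y | |(μY.rnDeriv νY y).toReal - 1| < ε} with hEYdef
  have hmEX : MeasurableSet EX :=
    measurableSet_lt (((Measure.measurable_rnDeriv μX νX).ennreal_toReal.sub
      measurable_const).abs) measurable_const
  have hmEY : MeasurableSet EY :=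
    measurableSet_lt (((Measure.measurable_rnDeriv μY νY).ennreal_toReal.sub
      measurable_const).abs) measurable_const
  have hε1 : ε < 1 := by linarith
  -- complement bounds
  have hcomplX : μX EXᶜ ≤ ENNReal.ofReal ε := by
    have h1 : μX EXᶜ = 1 - μX EX := by
      rw [measure_compl hmEX (measure_ne_top _ _), measure_univ]
    rw [h1]
    calc 1 - μX EX ≤ 1 - ENNReal.ofReal (1 - ε) := tsub_le_tsub_left hEX 1
      _ = ENNReal.ofReal ε := by
          rw [← ENNReal.ofReal_one, ← ENNReal.ofReal_sub _ (by linarith : (0:ℝ) ≤ 1 - ε)]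
          norm_num
  have hcomplY : νY EYᶜ ≤ ENNReal.ofReal ε := by
    have h1 : νY EYᶜ = 1 - νY EY := by
      rw [measure_compl hmEY (measure_ne_top _ _), measure_univ]
    rw [h1]
    calc 1 - νY EY ≤ 1 - ENNReal.ofReal (1 - ε) := tsub_le_tsub_left hEY 1
      _ = ENNReal.ofReal ε := by
          rw [← ENNReal.ofReal_one, ← ENNReal.ofReal_sub _ (by linarith : (0:ℝ) ≤ 1 - ε)]
          norm_num
  -- the bad set
  refine ⟨EXᶜ ∪ θ ⁻¹' EYᶜ, hmEX.compl.union (θ.measurable hmEY.compl), ?_, ?_⟩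
  · -- measure of bad set < 5ε
    have hpre : νX (θ ⁻¹' EYᶜ) ≤ ENNReal.ofReal ε := by
      rw [← MeasurableEquiv.map_apply θ, hmap]; exact hcomplY
    have hsplit : μX (θ ⁻¹' EYᶜ) ≤ μX (θ ⁻¹' EYᶜ ∩ EX) + μX EXᶜ := by
      calc μX (θ ⁻¹' EYᶜ) ≤ μX ((θ ⁻¹' EYᶜ ∩ EX) ∪ EXᶜ) := by
            apply measure_mono
            intro x hx
            by_cases h : x ∈ EX
            · exact Or.inl ⟨hx, h⟩
            · exact Or.inr h
        _ ≤ μX (θ ⁻¹' EYᶜ ∩ EX) + μX EXᶜ := measure_union_le _ _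
    have hmid : μX (θ ⁻¹' EYᶜ ∩ EX) ≤ ENNReal.ofReal (1 + ε) * ENNReal.ofReal ε := by
      have hb := (density_close_bounds μX νX hXac hε1
        ((θ.measurable hmEY.compl).inter hmEX)
        (fun x hx => hx.2)).2
      calc μX (θ ⁻¹' EYᶜ ∩ EX) ≤ ENNReal.ofReal (1 + ε) * νX (θ ⁻¹' EYᶜ ∩ EX) := hb
        _ ≤ ENNReal.ofReal (1 + ε) * νX (θ ⁻¹' EYᶜ) :=
            mul_le_mul_right (measure_mono Set.inter_subset_left) _
        _ ≤ ENNReal.ofReal (1 + ε) * ENNReal.ofReal ε := mul_le_mul_right hpre _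
    calc μX (EXᶜ ∪ θ ⁻¹' EYᶜ) ≤ μX EXᶜ + μX (θ ⁻¹' EYᶜ) := measure_union_le _ _
      _ ≤ ENNReal.ofReal ε + (ENNReal.ofReal (1 + ε) * ENNReal.ofReal ε + ENNReal.ofReal ε) :=
          add_le_add hcomplX (hsplit.trans (add_le_add hmid hcomplX))
      _ = ENNReal.ofReal (ε + ((1 + ε) * ε + ε)) := by
          rw [← ENNReal.ofReal_mul (by linarith), ← ENNReal.ofReal_add (by nlinarith) hε.le,
            ← ENNReal.ofReal_add hε.le (by nlinarith)]
      _ < ENNReal.ofReal (5 * ε) := by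
          apply ENNReal.ofReal_lt_ofReal_iff_of_nonneg (by nlinarith) |>.mpr
          nlinarith
  · -- the estimate on good sets
    intro S hSm hSsub
    have hScompl : S ⊆ EX ∩ θ ⁻¹' EY := by
      intro x hx
      have := hSsub hx
      rw [Set.compl_union] at this
      simpa using this
    have hTm : MeasurableSet (θ '' S) := θ.measurableEmbedding.measurableSet_image.mpr hSm
    have hνeq : νX S = νY (θ '' S) := by
      rw [← hmap, MeasurableEquiv.map_apply, Set.preimage_image_eq S θ.injective]
    have hbX := density_close_bounds μX νX hXac hε1 hSm (fun x hx => (hScompl hx).1)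
    have hbY := density_close_bounds μY νY hYac hε1 hTm
      (fun y hy => by
        obtain ⟨x, hx, rfl⟩ := hy
        exact (hScompl hx).2)
    constructor
    · -- lower bound: (1 - 5ε) μY (θ '' S) ≤ μX S
      calc ENNReal.ofReal (1 - 5 * ε) * μY (θ '' S)
          ≤ ENNReal.ofReal (1 - 5 * ε) * (ENNReal.ofReal (1 + ε) * νY (θ '' S)) :=
            mul_le_mul_right hbY.2 _
        _ = ENNReal.ofReal ((1 - 5 * ε) * (1 + ε)) * νY (θ '' S) := by
            rw [← mul_assoc, ← ENNReal.ofReal_mul (by linarith)]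
        _ ≤ ENNReal.ofReal (1 - ε) * νY (θ '' S) :=
            mul_le_mul_left (ENNReal.ofReal_le_ofReal (by nlinarith)) _
        _ = ENNReal.ofReal (1 - ε) * νX S := by rw [hνeq]
        _ ≤ μX S := hbX.1
    · -- upper bound: μX S ≤ (1 + 5ε) μY (θ '' S)
      calc μX S ≤ ENNReal.ofReal (1 + ε) * νX S := hbX.2
        _ = ENNReal.ofReal (1 + ε) * νY (θ '' S) := by rw [hνeq]
        _ ≤ ENNReal.ofReal ((1 + 5 * ε) * (1 - ε)) * νY (θ '' S) :=
            mul_le_mul_left (ENNReal.ofReal_le_ofReal (by nlinarith)) _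
        _ = ENNReal.ofReal (1 + 5 * ε) * (ENNReal.ofReal (1 - ε) * νY (θ '' S)) := by
            rw [← mul_assoc, ← ENNReal.ofReal_mul (by linarith)]
        _ ≤ ENNReal.ofReal (1 + 5 * ε) * μY (θ '' S) := mul_le_mul_right hbY.1 _
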